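/- Let p > 1 and r ∈ [1, p). Let X_1, X_2, … be random variables on a probability space with sup_{j≥1} ‖X_j‖_p < ∞, and let N be a random variable taking values in the positive integers with N ∈ L^s for some s satisfying s > r(1 + 1/p)/(1 − r/p). Then Σ_{j=1}^N X_j ∈ L^r; explicitly, ‖Σ_{j=1}^N X_j‖_r ≤ C (sup_{j≥1} ‖X_j‖_p) (‖N‖_s)^{s(1/r − 1/p)}, where C is a finite constant depending only on p, r and s. -/

import Mathlib

open MeasureTheory Filter
open scoped ENNReal NNReal Topology

/-- Lemma 4.5: a random sum `Σ_{j=1}^N X_j` of `L^p`-bounded random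
variables, with `N ∈ L^s` for `s > r(1 + 1/p)/(1 - r/p)`, lies in `L^r`, with the norm
bound `‖Σ_{j=1}^N X_j‖_r ≤ C (sup_j ‖X_j‖_p) ‖N‖_s^{s(1/r - 1/p)}`, where `C` depends
only on `p`, `r` and `s`. -/
theorem random_sum_Lr_bound
    (p r s : ℝ) (hp : 1 < p) (hr1 : 1 ≤ r) (hrp : r < p)
    (hs : r * (1 + 1 / p) / (1 - r / p) < s) :
    ∃ C : ℝ, 0 < C ∧
      ∀ (α : Type) (mα : MeasurableSpace α) (μ : Measure α),
        IsProbabilityMeasure μ →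
        ∀ (X : ℕ → α → ℝ) (N : α → ℕ) (M : ℝ),
          (∀ j : ℕ, MemLp (X j) (ENNReal.ofReal p) μ) →
          (∀ j : ℕ, eLpNorm (X j) (ENNReal.ofReal p) μ ≤ ENNReal.ofReal M) →
          (∀ a, 1 ≤ N a) → Measurable N →
          MemLp (fun a => (N a : ℝ)) (ENNReal.ofReal s) μ →
          MemLp (fun a => ∑ j ∈ Finset.Icc 1 (N a), X j a) (ENNReal.ofReal r) μ ∧
          eLpNorm (fun a => ∑ j ∈ Finset.Icc 1 (N a), X j a) (ENNReal.ofReal r) μ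
            ≤ ENNReal.ofReal
                (C * M * ((∫ a, (N a : ℝ) ^ s ∂μ) ^ (1 / s)) ^ (s * (1 / r - 1 / p))) := by
  have hp0 : (0:ℝ) < p := lt_trans one_pos hp
  have hr0 : (0:ℝ) < r := lt_of_lt_of_le one_pos hr1
  set θ : ℝ := 1 / r - 1 / p with hθdef
  have hθ : (0:ℝ) < θ := by
    rw [hθdef, sub_pos]
    exact one_div_lt_one_div_of_lt hr0 hrp
  have hsub : (0:ℝ) < 1 - r / p := by
    rw [sub_pos, div_lt_one hp0]; exact hrp
  have hA0 : (0:ℝ) < r * (1 + 1 / p) / (1 - r / p) := by positivity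
  have hs0 : (0:ℝ) < s := lt_trans hA0 hs
  have hsθ : 1 < s * θ := by
    have key : r * (1 + 1 / p) / (1 - r / p) * θ = (p + 1) / p := by
      have h1 : p - r ≠ 0 := sub_ne_zero_of_ne hrp.ne'
      have h2 : 1 - r / p = (p - r) / p := by field_simp
      rw [hθdef, h2]
      field_simp
    calc (1:ℝ) < (p + 1) / p := by rw [lt_div_iff₀ hp0]; linarith
      _ = r * (1 + 1 / p) / (1 - r / p) * θ := key.symm
      _ < s * θ := by exact mul_lt_mul_of_pos_right hs hθ
  -- the tail-sum constant
  have hsum : Summable (fun j : ℕ => (((j + 1 : ℕ) : ℝ) ^ (s * θ))⁻¹) := by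
    have h := (Real.summable_one_div_nat_rpow (p := s * θ)).mpr hsθ
    simp_rw [one_div] at h
    exact_mod_cast (summable_nat_add_iff 1).mpr h
  set Z : ℝ≥0∞ := ∑' j : ℕ, (((j + 1 : ℕ) : ℝ≥0∞) ^ (s * θ))⁻¹ with hZdef
  have hZeq : Z = ENNReal.ofReal (∑' j : ℕ, (((j + 1 : ℕ) : ℝ) ^ (s * θ))⁻¹) := by
    rw [ENNReal.ofReal_tsum_of_nonneg (fun n => by positivity) hsum]
    refine tsum_congr fun j => ?_
    rw [ENNReal.ofReal_inv_of_pos (by positivity),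
      ← ENNReal.ofReal_rpow_of_nonneg (by positivity) (le_of_lt (lt_trans one_pos hsθ)),
      ENNReal.ofReal_natCast]
  have hZ : Z ≠ ⊤ := by rw [hZeq]; exact ENNReal.ofReal_ne_top
  have hZC : Z ≤ ENNReal.ofReal (Z.toReal + 1) := by
    calc Z = ENNReal.ofReal Z.toReal := (ENNReal.ofReal_toReal hZ).symm
      _ ≤ ENNReal.ofReal (Z.toReal + 1) := ENNReal.ofReal_le_ofReal (by linarith)
  refine ⟨Z.toReal + 1, by positivity, ?_⟩
  intro α mα μ hprob X N M hX hXM hN1 hNmeas hNs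
  set pp := ENNReal.ofReal p with hpp
  set rr := ENNReal.ofReal r with hrr
  have hrrp : rr ≤ pp := ENNReal.ofReal_le_ofReal (le_of_lt hrp)
  have hrr1 : 1 ≤ rr := by
    rw [hrr, ← ENNReal.ofReal_one]; exact ENNReal.ofReal_le_ofReal hr1
  have htor : rr.toReal = r := ENNReal.toReal_ofReal hr0.le
  have htop : pp.toReal = p := ENNReal.toReal_ofReal hp0.le
  -- measurable versions
  have hXaesm : ∀ j, AEStronglyMeasurable (X j) μ := fun j => (hX j).1
  set Y : ℕ → α → ℝ := fun j => (hXaesm j).mk (X j) with hY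
  have hYsm : ∀ j, StronglyMeasurable (Y j) := fun j => (hXaesm j).stronglyMeasurable_mk
  have hXY : ∀ᵐ a ∂μ, ∀ j, X j a = Y j a := ae_all_iff.mpr fun j => (hXaesm j).ae_eq_mk
  set S : α → ℝ := fun a => ∑ j ∈ Finset.Icc 1 (N a), Y j a with hS
  have hSm : Measurable S := by
    have hg2 : Measurable (fun q : α × ℕ => ∑ j ∈ Finset.Icc 1 q.2, Y j q.1) :=
      measurable_from_prod_countable_left fun k => by
        simpa using Finset.measurable_sum (Finset.Icc 1 k) (fun j _ => (hYsm j).measurable)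
    exact hg2.comp (measurable_id.prodMk hNmeas)
  have hSsm : AEStronglyMeasurable S μ := hSm.aestronglyMeasurable
  have hSeq : (fun a => ∑ j ∈ Finset.Icc 1 (N a), X j a) =ᵐ[μ] S := by
    filter_upwards [hXY] with a ha
    exact Finset.sum_congr rfl fun j _ => ha j
  -- the sets and truncated pieces
  set A : ℕ → Set α := fun j => {a | j ≤ N a} with hA
  have hAm : ∀ j, MeasurableSet (A j) := fun j => hNmeas measurableSet_Ici
  set g : ℕ → α → ℝ := fun j => (A j).indicator (Y j) with hg
  have hgsm : ∀ j, StronglyMeasurable (g j) := fun j => (hYsm j).indicator (hAm j)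
  set L : ℝ≥0∞ := ∫⁻ a, ((N a : ℝ≥0∞)) ^ s ∂μ with hL
  have hNE : Measurable fun a => ((N a : ℝ≥0∞)) ^ s :=
    (measurable_from_top.comp hNmeas).pow_const s
  -- Markov inequality
  have hmeasA : ∀ j : ℕ, 1 ≤ j → μ (A j) ≤ L / (j : ℝ≥0∞) ^ s := by
    intro j hj
    have hj0 : (0:ℝ≥0∞) < (j : ℝ≥0∞) := by exact_mod_cast hj
    have hsubset : A j ⊆ {a | ((j : ℝ≥0∞)) ^ s ≤ ((N a : ℝ≥0∞)) ^ s} := fun a ha =>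
      ENNReal.rpow_le_rpow (by exact_mod_cast ha) hs0.le
    have hmark := mul_meas_ge_le_lintegral₀ (μ := μ) hNE.aemeasurable (((j : ℝ≥0∞)) ^ s)
    rw [ENNReal.le_div_iff_mul_le
      (Or.inl (ENNReal.rpow_pos hj0 (ENNReal.natCast_ne_top j)).ne')
      (Or.inl (ENNReal.rpow_ne_top_of_nonneg hs0.le (ENNReal.natCast_ne_top j)))]
    calc μ (A j) * (j : ℝ≥0∞) ^ s
        ≤ μ {a | ((j : ℝ≥0∞)) ^ s ≤ ((N a : ℝ≥0∞)) ^ s} * (j : ℝ≥0∞) ^ s :=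
          mul_le_mul_left (measure_mono hsubset) _
      _ = (j : ℝ≥0∞) ^ s * μ {a | ((j : ℝ≥0∞)) ^ s ≤ ((N a : ℝ≥0∞)) ^ s} := mul_comm _ _
      _ ≤ L := hmark
  -- the term bound
  have hterm : ∀ j : ℕ, 1 ≤ j →
      eLpNorm (g j) rr μ ≤ ENNReal.ofReal M * (L ^ θ * (((j : ℝ≥0∞)) ^ (s * θ))⁻¹) := by
    intro j hj
    have h1 : eLpNorm (g j) rr μ = eLpNorm (Y j) rr (μ.restrict (A j)) :=
      eLpNorm_indicator_eq_eLpNorm_restrict (hAm j)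
    have h2 : eLpNorm (Y j) rr (μ.restrict (A j)) ≤
        eLpNorm (Y j) pp (μ.restrict (A j)) *
          (μ.restrict (A j)) Set.univ ^ (1 / rr.toReal - 1 / pp.toReal) :=
      eLpNorm_le_eLpNorm_mul_rpow_measure_univ hrrp (hYsm j).aestronglyMeasurable
    rw [Measure.restrict_apply_univ, htor, htop] at h2
    have h3 : eLpNorm (Y j) pp (μ.restrict (A j)) ≤ eLpNorm (Y j) pp μ :=
      eLpNorm_mono_measure _ Measure.restrict_le_self
    have h4 : eLpNorm (Y j) pp μ ≤ ENNReal.ofReal M := by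
      rw [← eLpNorm_congr_ae (hXaesm j).ae_eq_mk]
      exact hXM j
    have h5 : μ (A j) ^ θ ≤ L ^ θ * (((j : ℝ≥0∞)) ^ (s * θ))⁻¹ := by
      calc μ (A j) ^ θ ≤ (L / (j : ℝ≥0∞) ^ s) ^ θ :=
            ENNReal.rpow_le_rpow (hmeasA j hj) hθ.le
        _ = L ^ θ / ((j : ℝ≥0∞) ^ s) ^ θ := ENNReal.div_rpow_of_nonneg _ _ hθ.le
        _ = L ^ θ * (((j : ℝ≥0∞)) ^ (s * θ))⁻¹ := by
            rw [div_eq_mul_inv, ← ENNReal.rpow_mul]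
    rw [h1]
    exact h2.trans (mul_le_mul' (h3.trans h4) h5)
  -- sum bound
  have hTbound : ∀ n : ℕ,
      eLpNorm (∑ j ∈ Finset.Icc 1 n, g j) rr μ ≤ ENNReal.ofReal M * (L ^ θ * Z) := by
    intro n
    refine le_trans (eLpNorm_sum_le (fun j _ => (hgsm j).aestronglyMeasurable) hrr1) ?_
    calc ∑ j ∈ Finset.Icc 1 n, eLpNorm (g j) rr μ
        ≤ ∑ j ∈ Finset.Icc 1 n, ENNReal.ofReal M * (L ^ θ * ((j : ℝ≥0∞) ^ (s * θ))⁻¹) :=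
          Finset.sum_le_sum fun j hj => hterm j (Finset.mem_Icc.mp hj).1
      _ = ENNReal.ofReal M * (L ^ θ * ∑ j ∈ Finset.Icc 1 n, ((j : ℝ≥0∞) ^ (s * θ))⁻¹) := by
          simp_rw [Finset.mul_sum]
      _ ≤ ENNReal.ofReal M * (L ^ θ * Z) := by
          refine mul_le_mul_right (mul_le_mul_right ?_ _) _
          have hre : ∑ j ∈ Finset.Icc 1 n, ((j : ℝ≥0∞) ^ (s * θ))⁻¹
              = ∑ j ∈ Finset.range n, (((j + 1 : ℕ) : ℝ≥0∞) ^ (s * θ))⁻¹ := by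
            rw [← Finset.Ico_add_one_right_eq_Icc, Finset.sum_Ico_eq_sum_range]
            refine Finset.sum_congr (by norm_num) fun j _ => ?_
            rw [add_comm 1 j]
          rw [hre, hZdef]
          exact ENNReal.sum_le_tsum _
  -- pass to the limit
  have hSbound : eLpNorm S rr μ ≤ ENNReal.ofReal M * (L ^ θ * Z) := by
    have hlim : ∀ᵐ a ∂μ,
        Tendsto (fun n => (∑ j ∈ Finset.Icc 1 n, g j) a) atTop (𝓝 (S a)) := by
      refine Eventually.of_forall fun a => tendsto_atTop_of_eventually_const (i₀ := N a) ?_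
      intro n hn
      simp only [Finset.sum_apply]
      have e1 : ∑ j ∈ Finset.Icc 1 (N a), g j a = ∑ j ∈ Finset.Icc 1 n, g j a := by
        refine Finset.sum_subset (Finset.Icc_subset_Icc le_rfl hn) fun j hjt hjs => ?_
        refine Set.indicator_of_notMem ?_ _
        intro hle
        exact hjs (Finset.mem_Icc.mpr ⟨(Finset.mem_Icc.mp hjt).1, hle⟩)
      have e2 : ∑ j ∈ Finset.Icc 1 (N a), g j a = S a :=
        Finset.sum_congr rfl fun j hj =>
          Set.indicator_of_mem (show a ∈ A j from (Finset.mem_Icc.mp hj).2) _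
      rw [← e1]; exact e2
    have hTsm : ∀ n : ℕ, AEStronglyMeasurable (∑ j ∈ Finset.Icc 1 n, g j) μ := fun n => by
      rw [Finset.sum_fn]
      exact (Finset.stronglyMeasurable_fun_sum _ fun j _ => hgsm j).aestronglyMeasurable
    have h1 := Lp.eLpNorm_lim_le_liminf_eLpNorm (p := rr) (μ := μ) hTsm S hlim
    refine h1.trans ?_
    refine le_trans (Filter.liminf_le_liminf (Eventually.of_forall hTbound)) ?_
    rw [Filter.liminf_const]
  -- conversion of the integral
  set I : ℝ := ∫ a, (N a : ℝ) ^ s ∂μ with hIdef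
  have hI0 : 0 ≤ I := integral_nonneg fun a => by positivity
  have hint : Integrable (fun a => (N a : ℝ) ^ s) μ := by
    have h := hNs.integrable_norm_rpow
      (by simp only [ne_eq, ENNReal.ofReal_eq_zero, not_le]; linarith) ENNReal.ofReal_ne_top
    simpa [ENNReal.toReal_ofReal hs0.le, Real.norm_eq_abs, Nat.abs_cast] using h
  have hLI : L = ENNReal.ofReal I := by
    rw [hIdef, ofReal_integral_eq_lintegral_ofReal hint
      (Eventually.of_forall fun a => by positivity)]
    refine lintegral_congr fun a => ?_
    rw [← ENNReal.ofReal_rpow_of_nonneg (by positivity) hs0.le, ENNReal.ofReal_natCast]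
  have hRHS : (I ^ (1 / s)) ^ (s * θ) = I ^ θ := by
    rw [← Real.rpow_mul hI0]
    congr 1
    field_simp
  -- final bound
  have hfinal : ENNReal.ofReal M * (L ^ θ * Z)
      ≤ ENNReal.ofReal ((Z.toReal + 1) * M * (I ^ (1 / s)) ^ (s * θ)) := by
    rw [hRHS, hLI, ENNReal.ofReal_rpow_of_nonneg hI0 hθ.le]
    calc ENNReal.ofReal M * (ENNReal.ofReal (I ^ θ) * Z)
        ≤ ENNReal.ofReal M * (ENNReal.ofReal (I ^ θ) * ENNReal.ofReal (Z.toReal + 1)) :=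
          mul_le_mul_right (mul_le_mul_right hZC _) _
      _ = ENNReal.ofReal M * ENNReal.ofReal (I ^ θ * (Z.toReal + 1)) := by
          rw [ENNReal.ofReal_mul (by positivity)]
      _ = ENNReal.ofReal (M * (I ^ θ * (Z.toReal + 1))) :=
          (ENNReal.ofReal_mul' (by positivity)).symm
      _ = ENNReal.ofReal ((Z.toReal + 1) * M * I ^ θ) := by
          congr 1; ring
  have hSb2 : eLpNorm S rr μ
      ≤ ENNReal.ofReal ((Z.toReal + 1) * M * (I ^ (1 / s)) ^ (s * θ)) :=
    hSbound.trans hfinal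
  have hmain : eLpNorm (fun a => ∑ j ∈ Finset.Icc 1 (N a), X j a) rr μ
      ≤ ENNReal.ofReal ((Z.toReal + 1) * M * (I ^ (1 / s)) ^ (s * θ)) := by
    rw [eLpNorm_congr_ae hSeq]; exact hSb2
  exact ⟨⟨hSsm.congr hSeq.symm, lt_of_le_of_lt hmain ENNReal.ofReal_lt_top⟩, hmain⟩
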